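/- arXiv:2605.13283 — 2 statements merged into one kernel-verified Lean document; each statement's English description precedes it below -/
import Mathlib

section
/- Deterministic trimmed-mean aggregation bound: Let m be a positive integer, let M ⊆ {1,...,m} be the set of honest indices with |M| = (1−α)m and B = {1,...,m} \ M the Byzantine set with |B| = αm. Given real numbers g^{(1)},...,g^{(m)} and any μ ∈ ℝ, let trmean_β denote the β-trimmed mean, which removes the βm smallest and βm largest values and averages the remaining (1−2β)m values. If β > α (and βm, αm are integers with β < 1/2), then |trmean_β{g^{(k)} : k ∈ [m]} − μ| ≤ (1/((1−2β)m))·|Σ_{k ∈ M}(g^{(k)} − μ)| + ((2β + α)/(1−2β))·max_{k ∈ M}|g^{(k)} − μ|. -/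
/-- Deterministic trimmed-mean aggregation bound.  The honest set `M` has
`(1−α)m` elements, the Byzantine set `Mᶜ` has `αm` elements, and the trimmed
set consists of `Tlo` (the `βm` smallest values) and `Thi` (the `βm` largest
values).  If `β > α` then the `β`-trimmed mean (= average of the values over the
untrimmed set `(Tlo ∪ Thi)ᶜ`) satisfies
`|trmean − μ| ≤ (1/((1−2β)m))|∑_{k∈M}(g k − μ)| + ((2β+α)/(1−2β)) max_{k∈M}|g k − μ|`. -/
theorem trimmed_mean_bound (m : ℕ) (hm : 0 < m) (α β : ℝ)
    (hα0 : 0 ≤ α) (hαβ : α < β) (hβ : β < 1 / 2)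
    (g : Fin m → ℝ) (μ : ℝ)
    (M : Finset (Fin m)) (hMne : M.Nonempty)
    (hMcard : (M.card : ℝ) = (1 - α) * m)
    (hBcard : (Mᶜ.card : ℝ) = α * m)
    (Tlo Thi : Finset (Fin m)) (hdisj : Disjoint Tlo Thi)
    (hTlo : (Tlo.card : ℝ) = β * m) (hThi : (Thi.card : ℝ) = β * m)
    (hlo : ∀ i ∈ Tlo, ∀ j ∉ Tlo, g i ≤ g j)
    (hhi : ∀ i ∈ Thi, ∀ j ∉ Thi, g j ≤ g i) :
    |(∑ k ∈ (Tlo ∪ Thi)ᶜ, g k) / ((1 - 2 * β) * m) - μ| ≤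
      (1 / ((1 - 2 * β) * m)) * |∑ k ∈ M, (g k - μ)| +
        ((2 * β + α) / (1 - 2 * β)) * M.sup' hMne (fun k => |g k - μ|) := by
  set G := M.sup' hMne (fun k => |g k - μ|) with hGdef
  have hGnn : 0 ≤ G := by
    obtain ⟨k, hk⟩ := hMne
    exact le_trans (abs_nonneg _) (Finset.le_sup' (fun k => |g k - μ|) hk)
  have hmR : (0:ℝ) < m := by exact_mod_cast hm
  have hD : (0:ℝ) < (1 - 2*β) * m := by
    apply mul_pos; · linarith
    · exact hmR
  have hUnion : (((Tlo ∪ Thi)).card : ℝ) = 2*β*m := by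
    rw [Finset.card_union_of_disjoint hdisj]
    push_cast
    rw [hTlo, hThi]; ring
  have hle : (Tlo ∪ Thi).card ≤ m := by
    have := Finset.card_le_univ (Tlo ∪ Thi)
    simpa using this
  have hUcard : ((((Tlo ∪ Thi)ᶜ).card : ℝ)) = (1 - 2*β)*m := by
    rw [Finset.card_compl, Fintype.card_fin, Nat.cast_sub hle, hUnion]
    ring
  -- honest points exist in Tlo and Thi
  have honest_in : ∀ T : Finset (Fin m), (T.card : ℝ) = β * m → (T ∩ M).Nonempty := by
    intro T hT
    rw [Finset.nonempty_iff_ne_empty]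
    intro h
    have hsub : T ⊆ Mᶜ := by
      intro x hx
      rw [Finset.mem_compl]
      intro hxM
      exact Finset.notMem_empty x (h ▸ Finset.mem_inter.mpr ⟨hx, hxM⟩)
    have h1 := Finset.card_le_card hsub
    have h2 : (T.card:ℝ) ≤ (Mᶜ.card:ℝ) := by exact_mod_cast h1
    rw [hT, hBcard] at h2
    nlinarith
  obtain ⟨i0, hi0⟩ := honest_in Tlo hTlo
  obtain ⟨j0, hj0⟩ := honest_in Thi hThi
  rw [Finset.mem_inter] at hi0 hj0
  have hkeyM : ∀ k ∈ M, |g k - μ| ≤ G := fun k hk => Finset.le_sup' (fun k => |g k - μ|) hk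
  have hkey : ∀ k ∈ (Tlo ∪ Thi)ᶜ, |g k - μ| ≤ G := by
    intro k hk
    rw [Finset.mem_compl, Finset.mem_union] at hk
    push_neg at hk
    have h1 : g i0 ≤ g k := hlo i0 hi0.1 k hk.1
    have h2 : g k ≤ g j0 := hhi j0 hj0.1 k hk.2
    have hiG := hkeyM i0 hi0.2
    have hjG := hkeyM j0 hj0.2
    rw [abs_le] at hiG hjG ⊢
    constructor
    · linarith [hiG.1]
    · linarith [hjG.2]
  -- sum bounds on the two difference sets
  have cardsum : ∀ (s : Finset (Fin m)) (C : ℝ), (∀ k ∈ s, |g k - μ| ≤ G) →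
      ((s.card : ℝ) ≤ C) → |∑ k ∈ s, (g k - μ)| ≤ C * G := by
    intro s C hmem hcard
    calc |∑ k ∈ s, (g k - μ)| ≤ ∑ k ∈ s, |g k - μ| := Finset.abs_sum_le_sum_abs _ _
      _ ≤ s.card • G := Finset.sum_le_card_nsmul _ _ G hmem
      _ = (s.card : ℝ) * G := by rw [nsmul_eq_mul]
      _ ≤ C * G := mul_le_mul_of_nonneg_right hcard hGnn
  have h1 : |∑ k ∈ (Tlo ∪ Thi)ᶜ \ M, (g k - μ)| ≤ α*m*G := by
    apply cardsum _ _ (fun k hk => hkey k (Finset.mem_sdiff.mp hk).1)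
    have hsub : (Tlo ∪ Thi)ᶜ \ M ⊆ Mᶜ := by
      intro x hx
      rw [Finset.mem_sdiff] at hx
      rw [Finset.mem_compl]; exact hx.2
    have := Finset.card_le_card hsub
    have h2 : (((Tlo ∪ Thi)ᶜ \ M).card : ℝ) ≤ (Mᶜ.card : ℝ) := by exact_mod_cast this
    rw [hBcard] at h2; exact h2
  have h2 : |∑ k ∈ M \ (Tlo ∪ Thi)ᶜ, (g k - μ)| ≤ 2*β*m*G := by
    apply cardsum _ _ (fun k hk => hkeyM k (Finset.mem_sdiff.mp hk).1)
    have hsub : M \ (Tlo ∪ Thi)ᶜ ⊆ Tlo ∪ Thi := by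
      intro x hx
      rw [Finset.mem_sdiff, Finset.mem_compl] at hx
      exact not_not.mp hx.2
    have := Finset.card_le_card hsub
    have h3 : ((M \ (Tlo ∪ Thi)ᶜ).card : ℝ) ≤ ((Tlo ∪ Thi).card : ℝ) := by exact_mod_cast this
    rw [hUnion] at h3; exact h3
  have e1 := Finset.sum_inter_add_sum_sdiff ((Tlo ∪ Thi)ᶜ) M (fun k => g k - μ)
  have e2 := Finset.sum_inter_add_sum_sdiff M ((Tlo ∪ Thi)ᶜ) (fun k => g k - μ)
  rw [Finset.inter_comm] at e1
  have key : |∑ k ∈ (Tlo ∪ Thi)ᶜ, (g k - μ)| ≤ |∑ k ∈ M, (g k - μ)| + (2*β+α)*m*G := by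
    have hd : ∑ k ∈ (Tlo ∪ Thi)ᶜ, (g k - μ)
        = (∑ k ∈ M, (g k - μ)) + (∑ k ∈ (Tlo ∪ Thi)ᶜ \ M, (g k - μ))
          - (∑ k ∈ M \ (Tlo ∪ Thi)ᶜ, (g k - μ)) := by
      linarith
    rw [hd]
    have t1 := abs_sub (∑ k ∈ M, (g k - μ)) (∑ k ∈ M \ (Tlo ∪ Thi)ᶜ, (g k - μ))
    have ta := abs_add_le ((∑ k ∈ M, (g k - μ)) + (∑ k ∈ (Tlo ∪ Thi)ᶜ \ M, (g k - μ)))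
        (-(∑ k ∈ M \ (Tlo ∪ Thi)ᶜ, (g k - μ)))
    have tb := abs_add_le (∑ k ∈ M, (g k - μ)) (∑ k ∈ (Tlo ∪ Thi)ᶜ \ M, (g k - μ))
    rw [abs_neg] at ta
    have : (∑ k ∈ M, (g k - μ)) + (∑ k ∈ (Tlo ∪ Thi)ᶜ \ M, (g k - μ))
          - (∑ k ∈ M \ (Tlo ∪ Thi)ᶜ, (g k - μ))
        = (∑ k ∈ M, (g k - μ)) + (∑ k ∈ (Tlo ∪ Thi)ᶜ \ M, (g k - μ))
          + (-(∑ k ∈ M \ (Tlo ∪ Thi)ᶜ, (g k - μ))) := by ring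
    rw [this]
    nlinarith [ta, tb, h1, h2]
  -- rewrite the LHS
  have hsum : ∑ k ∈ (Tlo ∪ Thi)ᶜ, (g k - μ)
      = (∑ k ∈ (Tlo ∪ Thi)ᶜ, g k) - (1 - 2*β)*m*μ := by
    rw [Finset.sum_sub_distrib, Finset.sum_const, nsmul_eq_mul, hUcard]
  have hrw : (∑ k ∈ (Tlo ∪ Thi)ᶜ, g k) / ((1 - 2 * β) * m) - μ
      = (∑ k ∈ (Tlo ∪ Thi)ᶜ, (g k - μ)) / ((1 - 2 * β) * m) := by
    rw [hsum]
    field_simp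
    rw [sub_div, mul_assoc, mul_div_cancel_left₀ _ (show (1 - 2*β) ≠ 0 by linarith)]
  rw [hrw, abs_div, abs_of_pos hD]
  have hb : (1 - 2*β) ≠ 0 := by linarith
  have hb' : (1 - β*2) ≠ 0 := by linarith
  have hmne : ((m:ℝ)) ≠ 0 := ne_of_gt hmR
  have hrhs : (1 / ((1 - 2 * β) * m)) * |∑ k ∈ M, (g k - μ)| + ((2 * β + α) / (1 - 2 * β)) * G
      = (|∑ k ∈ M, (g k - μ)| + (2*β+α)*m*G) / ((1 - 2*β)*m) := by
    field_simp
  rw [hrhs]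
  gcongr
end

section
/- In the setting of the trimmed-mean lemma: if β > α, then for every Byzantine index r in the untrimmed set (r ∈ B ∩ U), there exists an honest trimmed index i ∈ M ∩ T (where T = [m] \ U is the trimmed set) such that |g^{(i)} − μ| ≥ |g^{(r)} − μ|. Consequently |Σ_{k ∈ B ∩ U}(g^{(k)} − μ)| ≤ αm · max_{k ∈ M}|g^{(k)} − μ|. -/
/-- In the trimmed-mean setting with β > α:  every Byzantine index `r` in the
untrimmed set `U = (Tlo ∪ Thi)ᶜ` is dominated by some honest trimmed index
`i ∈ M ∩ (Tlo ∪ Thi)` with `|g i − μ| ≥ |g r − μ|`; consequently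
`|∑_{k ∈ B ∩ U}(g k − μ)| ≤ αm · max_{k∈M}|g k − μ|`. -/
theorem byzantine_untrimmed_bound (m : ℕ) (hm : 0 < m) (α β : ℝ)
    (hα0 : 0 ≤ α) (hαβ : α < β) (hβ : β < 1 / 2)
    (g : Fin m → ℝ) (μ : ℝ)
    (M : Finset (Fin m)) (hMne : M.Nonempty)
    (hMcard : (M.card : ℝ) = (1 - α) * m)
    (hBcard : (Mᶜ.card : ℝ) = α * m)
    (Tlo Thi : Finset (Fin m)) (hdisj : Disjoint Tlo Thi)
    (hTlo : (Tlo.card : ℝ) = β * m) (hThi : (Thi.card : ℝ) = β * m)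
    (hlo : ∀ i ∈ Tlo, ∀ j ∉ Tlo, g i ≤ g j)
    (hhi : ∀ i ∈ Thi, ∀ j ∉ Thi, g j ≤ g i) :
    (∀ r ∈ Mᶜ ∩ (Tlo ∪ Thi)ᶜ, ∃ i ∈ M ∩ (Tlo ∪ Thi), |g r - μ| ≤ |g i - μ|) ∧
      |∑ k ∈ Mᶜ ∩ (Tlo ∪ Thi)ᶜ, (g k - μ)| ≤
        α * m * M.sup' hMne (fun k => |g k - μ|) := by
  have hmR : (0:ℝ) < m := by exact_mod_cast hm
  have hcard : Mᶜ.card < Tlo.card := by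
    have : (Mᶜ.card : ℝ) < (Tlo.card : ℝ) := by
      rw [hTlo, hBcard]; exact mul_lt_mul_of_pos_right hαβ hmR
    exact_mod_cast this
  have hcard' : Mᶜ.card < Thi.card := by
    have : (Mᶜ.card : ℝ) < (Thi.card : ℝ) := by
      rw [hThi, hBcard]; exact mul_lt_mul_of_pos_right hαβ hmR
    exact_mod_cast this
  have hMTlo : (M ∩ Tlo).Nonempty := by
    rw [Finset.nonempty_iff_ne_empty]
    intro h
    have hsub : Tlo ⊆ Mᶜ := by
      intro x hx
      rw [Finset.mem_compl]
      intro hxM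
      have : x ∈ M ∩ Tlo := Finset.mem_inter.2 ⟨hxM, hx⟩
      simp [h] at this
    exact absurd (Finset.card_le_card hsub) (not_le.2 hcard)
  have hMThi : (M ∩ Thi).Nonempty := by
    rw [Finset.nonempty_iff_ne_empty]
    intro h
    have hsub : Thi ⊆ Mᶜ := by
      intro x hx
      rw [Finset.mem_compl]
      intro hxM
      have : x ∈ M ∩ Thi := Finset.mem_inter.2 ⟨hxM, hx⟩
      simp [h] at this
    exact absurd (Finset.card_le_card hsub) (not_le.2 hcard')
  obtain ⟨ilo, hilo⟩ := hMTlo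
  obtain ⟨ihi, hihi⟩ := hMThi
  rw [Finset.mem_inter] at hilo hihi
  have key : ∀ r ∈ Mᶜ ∩ (Tlo ∪ Thi)ᶜ, ∃ i ∈ M ∩ (Tlo ∪ Thi), |g r - μ| ≤ |g i - μ| := by
    intro r hr
    simp only [Finset.mem_inter, Finset.mem_compl, Finset.mem_union, not_or] at hr
    obtain ⟨hrM, hrlo, hrhi⟩ := hr
    have h1 : g ilo ≤ g r := hlo ilo hilo.2 r hrlo
    have h2 : g r ≤ g ihi := hhi ihi hihi.2 r hrhi
    have hb : |g r - μ| ≤ max |g ilo - μ| |g ihi - μ| := by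
      rw [abs_le]
      constructor
      · have := neg_abs_le (g ilo - μ)
        have := le_max_left |g ilo - μ| |g ihi - μ|
        linarith
      · have := le_abs_self (g ihi - μ)
        have := le_max_right |g ilo - μ| |g ihi - μ|
        linarith
    rcases le_total |g ilo - μ| |g ihi - μ| with hc | hc
    · exact ⟨ihi, Finset.mem_inter.2 ⟨hihi.1, Finset.mem_union_right _ hihi.2⟩,
        by rw [max_eq_right hc] at hb; exact hb⟩
    · exact ⟨ilo, Finset.mem_inter.2 ⟨hilo.1, Finset.mem_union_left _ hilo.2⟩,
        by rw [max_eq_left hc] at hb; exact hb⟩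
  refine ⟨key, ?_⟩
  have hsup0 : 0 ≤ M.sup' hMne fun k => |g k - μ| :=
    le_trans (abs_nonneg (g hMne.choose - μ)) (Finset.le_sup' (fun k => |g k - μ|) hMne.choose_spec)
  set s := Mᶜ ∩ (Tlo ∪ Thi)ᶜ with hs
  calc |∑ k ∈ s, (g k - μ)| ≤ ∑ k ∈ s, |g k - μ| := Finset.abs_sum_le_sum_abs _ _
    _ ≤ ∑ _k ∈ s, M.sup' hMne (fun k => |g k - μ|) := by
        apply Finset.sum_le_sum
        intro k hk
        obtain ⟨i, hi, hle⟩ := key k hk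
        exact hle.trans (Finset.le_sup' (fun k => |g k - μ|) (Finset.mem_inter.1 hi).1)
    _ = (s.card : ℝ) * M.sup' hMne (fun k => |g k - μ|) := by
        rw [Finset.sum_const, nsmul_eq_mul]
    _ ≤ α * m * M.sup' hMne (fun k => |g k - μ|) := by
        apply mul_le_mul_of_nonneg_right _ hsup0
        have h1 : s.card ≤ Mᶜ.card := Finset.card_le_card Finset.inter_subset_left
        calc (s.card : ℝ) ≤ (Mᶜ.card : ℝ) := by exact_mod_cast h1
          _ = α * m := hBcard
end
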